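/- Let n ≥ 3 and let T = (t_{i,j}) be an invertible n×n real matrix with all entries positive such that t_{i,i} ≥ Σ_{j≠i} t_{i,j} for every row i. Let S be the diagonal matrix with S_{i,i} = 1/t_{i,i}. If C(m,M) > 0, then max_{i,j} |(T^{-1} − S)_{i,j}| ≤ M / (m² (n−1)² C(m,M)). -/

import Mathlib

/-- The constant `C(m,M)` from the paper (with its dependence on `n` explicit). -/
noncomputable def Capprox (n : ℕ) (m M : ℝ) : ℝ :=
  2 * ((n : ℝ) - 2) * m / ((n : ℝ) * M + ((n : ℝ) - 2) * m)
    - ((n : ℝ) - 2) * M * m / ((((n : ℝ) - 2) * m + M) * (((n : ℝ) - 2) * m + 2 * M))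
    - M / (m * ((n : ℝ) - 1))

theorem stmt_0 {n : ℕ} (hn : 3 ≤ n) (T : Matrix (Fin n) (Fin n) ℝ)
    (hinv : IsUnit T.det)
    (hpos : ∀ i j, 0 < T i j)
    (hdom : ∀ i, ∑ j ∈ Finset.univ.erase i, T i j ≤ T i i)
    (m M : ℝ) (Δ : Fin n → ℝ)
    (hΔ : ∀ i, Δ i = T i i - ∑ j ∈ Finset.univ.erase i, T i j)
    (hm1 : ∀ i j, i ≠ j → m ≤ T i j)
    (hm2 : ∃ i j, i ≠ j ∧ T i j = m)
    (hM1 : ∀ i j, i ≠ j → T i j ≤ M)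
    (hM2 : ∀ i, Δ i ≤ M)
    (hM3 : (∃ i j, i ≠ j ∧ T i j = M) ∨ (∃ i, Δ i = M))
    (hC : 0 < Capprox n m M) :
    ∀ i j, |(T⁻¹ - Matrix.diagonal fun k => (T k k)⁻¹) i j| ≤
      M / (m ^ 2 * ((n : ℝ) - 1) ^ 2 * Capprox n m M) := by
  intro i j
  -- basic positivity
  obtain ⟨i₀, j₀, hne₀, hm₀⟩ := hm2
  have hm0 : 0 < m := hm₀ ▸ hpos i₀ j₀
  have hmM : m ≤ M := hm₀ ▸ hM1 i₀ j₀ hne₀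
  have hM0 : 0 < M := lt_of_lt_of_le hm0 hmM
  have hn3 : (3:ℝ) ≤ (n:ℝ) := by exact_mod_cast hn
  have hn1 : (0:ℝ) < (n:ℝ) - 1 := by linarith
  have hn2 : (0:ℝ) < (n:ℝ) - 2 := by linarith
  have hcard : ∀ i : Fin n, ((Finset.univ.erase i).card : ℝ) = (n:ℝ) - 1 := by
    intro i
    rw [Finset.card_erase_of_mem (Finset.mem_univ i), Finset.card_univ, Fintype.card_fin,
      Nat.cast_sub (by omega)]
    norm_num
  have hrow_lb : ∀ i : Fin n, ((n:ℝ) - 1) * m ≤ ∑ k ∈ Finset.univ.erase i, T i k := by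
    intro i
    have h := Finset.card_nsmul_le_sum (Finset.univ.erase i) (fun k => T i k) m
      (fun k hk => hm1 i k (Ne.symm (Finset.ne_of_mem_erase hk)))
    rw [nsmul_eq_mul, hcard i] at h
    exact h
  have hrow_ub : ∀ i : Fin n, ∑ k ∈ Finset.univ.erase i, T i k ≤ ((n:ℝ) - 1) * M := by
    intro i
    have h := Finset.sum_le_card_nsmul (Finset.univ.erase i) (fun k => T i k) M
      (fun k hk => hM1 i k (Ne.symm (Finset.ne_of_mem_erase hk)))
    rw [nsmul_eq_mul, hcard i] at h
    exact h
  have hdiag_lb : ∀ i, ((n:ℝ) - 1) * m ≤ T i i := fun i => le_trans (hrow_lb i) (hdom i)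
  have hdiag_ub : ∀ i, T i i ≤ (n:ℝ) * M := by
    intro i
    have h1 := hM2 i
    rw [hΔ i] at h1
    have h2 := hrow_ub i
    linarith
  have hdiag_pos : ∀ i, 0 < T i i := by
    intro i
    have : (0:ℝ) < ((n:ℝ) - 1) * m := mul_pos hn1 hm0
    linarith [hdiag_lb i]
  have hτ0 : 0 < T j j := hdiag_pos j
  -- the inverse relation
  have hTT : T * T⁻¹ = 1 := Matrix.mul_nonsing_inv T hinv
  set u : Fin n → ℝ := fun k => T⁻¹ k j - (if k = j then (T j j)⁻¹ else 0) with hu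
  set w : Fin n → ℝ := fun k => T k j / T j j - (if k = j then 1 else 0) with hwdef
  clear_value u w
  have rowEq : ∀ i : Fin n, ∑ k, T i k * u k = -(w i) := by
    intro i
    have h1 : ∑ k, T i k * T⁻¹ k j = (if i = j then (1:ℝ) else 0) := by
      have := congrArg (fun A => A i j) hTT
      simpa [Matrix.mul_apply, Matrix.one_apply] using this
    have h2 : ∑ k, T i k * (if k = j then (T j j)⁻¹ else 0) = T i j * (T j j)⁻¹ := by
      rw [Finset.sum_congr rfl (fun k _ => by
        rw [mul_ite, mul_zero] : ∀ k ∈ Finset.univ,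
          T i k * (if k = j then (T j j)⁻¹ else 0) = if k = j then T i k * (T j j)⁻¹ else 0)]
      simp
    have h3 : ∑ k, T i k * u k
        = (∑ k, T i k * T⁻¹ k j) - ∑ k, T i k * (if k = j then (T j j)⁻¹ else 0) := by
      rw [← Finset.sum_sub_distrib]
      exact Finset.sum_congr rfl (fun k _ => by rw [hu]; ring)
    rw [h3, h1, h2, hwdef]
    simp only [div_eq_mul_inv]
    ring
  have hwj : w j = 0 := by
    rw [hwdef]
    simp [div_self (ne_of_gt hτ0)]
  have hw0 : ∀ k, 0 ≤ w k := by
    intro k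
    by_cases hk : k = j
    · rw [hk, hwj]
    · rw [hwdef]
      simp only [hk, if_false, sub_zero]
      exact div_nonneg (le_of_lt (hpos k j)) (le_of_lt hτ0)
  have hwM : ∀ k, w k * T j j ≤ M := by
    intro k
    by_cases hk : k = j
    · rw [hk, hwj]; nlinarith
    · rw [hwdef]
      simp only [hk, if_false, sub_zero]
      rw [div_mul_cancel₀ _ (ne_of_gt hτ0)]
      exact hM1 k j hk
  -- max and min
  obtain ⟨α, -, hαmax⟩ := Finset.exists_max_image Finset.univ u ⟨j, Finset.mem_univ j⟩
  obtain ⟨p, -, hpmin⟩ := Finset.exists_min_image Finset.univ u ⟨j, Finset.mem_univ j⟩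
  have hmax : ∀ k, u k ≤ u α := fun k => hαmax k (Finset.mem_univ k)
  have hmin : ∀ k, u p ≤ u k := fun k => hpmin k (Finset.mem_univ k)
  -- 0 ≤ u α
  have ha0 : 0 ≤ u α := by
    by_contra hlt
    push_neg at hlt
    have hsum : ∑ k, T j k * u k < 0 := by
      have hne : (Finset.univ : Finset (Fin n)).Nonempty := ⟨j, Finset.mem_univ j⟩
      have := Finset.sum_lt_sum_of_nonempty hne
        (f := fun k => T j k * u k) (g := fun _ => (0:ℝ))
        (fun k _ => mul_neg_of_pos_of_neg (hpos j k) (lt_of_le_of_lt (hmax k) hlt))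
      simpa using this
    rw [rowEq j, hwj] at hsum
    simp at hsum
  -- u α + u p ≤ 0
  have hpa : u α + u p ≤ 0 := by
    by_contra h
    push_neg at h
    have hRα : ∑ k ∈ Finset.univ.erase α, T α k * u k + T α α * u α
        = ∑ k, T α k * u k := Finset.sum_erase_add _ _ (Finset.mem_univ α)
    have hstep : ∑ k ∈ Finset.univ.erase α, T α k * (-(u α))
        < ∑ k ∈ Finset.univ.erase α, T α k * u k := by
      apply Finset.sum_lt_sum_of_nonempty
      · rw [← Finset.card_pos, Finset.card_erase_of_mem (Finset.mem_univ α),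
          Finset.card_univ, Fintype.card_fin]
        omega
      · intro k hk
        have : -(u α) < u k := by linarith [hmin k]
        exact (mul_lt_mul_iff_right₀ (hpos α k)).2 this
    have hsum_mul : ∑ k ∈ Finset.univ.erase α, T α k * (-(u α))
        = (∑ k ∈ Finset.univ.erase α, T α k) * (-(u α)) := by
      rw [← Finset.sum_mul]
    have hge : T α α * (-(u α)) ≤ (∑ k ∈ Finset.univ.erase α, T α k) * (-(u α)) :=
      mul_le_mul_of_nonpos_right (hdom α) (by linarith)
    have hgt : 0 < ∑ k, T α k * u k := by
      rw [← hRα]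
      calc (0:ℝ) = T α α * u α + T α α * (-(u α)) := by ring
        _ ≤ T α α * u α + (∑ k ∈ Finset.univ.erase α, T α k) * (-(u α)) := by
            linarith only [hge]
        _ = T α α * u α + ∑ k ∈ Finset.univ.erase α, T α k * (-(u α)) := by
            rw [hsum_mul]
        _ < T α α * u α + ∑ k ∈ Finset.univ.erase α, T α k * u k := by
            linarith only [hstep]
        _ = ∑ k ∈ Finset.univ.erase α, T α k * u k + T α α * u α := by ring
    rw [rowEq α] at hgt
    linarith [hw0 α]
  set ρ : ℝ := -(u p) with hρdef
  clear_value ρ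
  have hρa : u α ≤ ρ := by linarith
  have huiρ : |u i| ≤ ρ := abs_le.2 ⟨by linarith [hmin i], by linarith [hmax i]⟩
  have hCpos_den : 0 < m ^ 2 * ((n:ℝ) - 1) ^ 2 * Capprox n m M := by
    apply mul_pos (mul_pos (by positivity) (by positivity)) hC
  -- main bound : ρ ≤ goal RHS
  have hρG : ρ ≤ M / (m ^ 2 * ((n:ℝ) - 1) ^ 2 * Capprox n m M) := by
    rcases le_or_gt ρ 0 with hρ | hρ
    · exact le_trans hρ (le_of_lt (div_pos hM0 hCpos_den))
    · -- ρ > 0 : main chain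
      have hpα : p ≠ α := by
        intro hEq
        rw [hEq] at hρdef
        have : u α < 0 := by linarith
        linarith
      -- row p rearranged
      have hEp : ∑ k ∈ Finset.univ.erase p, T p k * u k = -(w p) - T p p * u p := by
        have h : ∑ k ∈ Finset.univ.erase p, T p k * u k + T p p * u p
            = ∑ k, T p k * u k := Finset.sum_erase_add _ _ (Finset.mem_univ p)
        rw [rowEq p] at h
        linarith
      set Rp : ℝ := ∑ k ∈ Finset.univ.erase p, T p k with hRp
      have hE1 : ∑ k ∈ Finset.univ.erase p, T p k * (u α - u k)
          = u α * Rp + w p + T p p * u p := by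
        simp only [mul_sub]
        rw [Finset.sum_sub_distrib, hEp, hRp, ← Finset.sum_mul]
        ring
      have hE1nonneg : 0 ≤ u α * Rp + w p + T p p * u p := by
        rw [← hE1]
        exact Finset.sum_nonneg fun k _ =>
          mul_nonneg (le_of_lt (hpos p k)) (by linarith [hmax k])
      have hup : T p p * u p = -(T p p * ρ) := by rw [hρdef]; ring
      have hRp_le : Rp ≤ T p p := hdom p
      have huαRp : u α * Rp ≤ u α * T p p := mul_le_mul_of_nonneg_left hRp_le ha0
      -- (i)
      have hi1 : T p p * (ρ - u α) ≤ w p := by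
        linarith only [hE1nonneg, hup, huαRp]
      -- (ii)
      have hH1 : m * ∑ k ∈ Finset.univ.erase p, (u α - u k)
          ≤ u α * T p p + w p - T p p * ρ := by
        have hle : ∑ k ∈ Finset.univ.erase p, m * (u α - u k)
            ≤ ∑ k ∈ Finset.univ.erase p, T p k * (u α - u k) :=
          Finset.sum_le_sum fun k hk =>
            mul_le_mul_of_nonneg_right
              (hm1 p k (Ne.symm (Finset.ne_of_mem_erase hk))) (by linarith [hmax k])
        rw [← Finset.mul_sum] at hle
        rw [hE1] at hle
        linarith only [hle, huαRp, hup]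
      -- row α rearranged
      have hEα : ∑ k ∈ Finset.univ.erase α, T α k * u k = -(w α) - T α α * u α := by
        have h : ∑ k ∈ Finset.univ.erase α, T α k * u k + T α α * u α
            = ∑ k, T α k * u k := Finset.sum_erase_add _ _ (Finset.mem_univ α)
        rw [rowEq α] at h
        linarith
      set Rα : ℝ := ∑ k ∈ Finset.univ.erase α, T α k with hRαdef
      have hE2 : ∑ k ∈ Finset.univ.erase α, T α k * (u k - u p)
          = -(w α) - T α α * u α - u p * Rα := by
        simp only [mul_sub]
        rw [Finset.sum_sub_distrib, hEα, hRαdef, ← Finset.sum_mul]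
        ring
      have hL1 : m * ∑ k ∈ Finset.univ.erase α, (u k - u p)
          ≤ T α α * ρ - T α α * u α := by
        have hle : ∑ k ∈ Finset.univ.erase α, m * (u k - u p)
            ≤ ∑ k ∈ Finset.univ.erase α, T α k * (u k - u p) :=
          Finset.sum_le_sum fun k hk =>
            mul_le_mul_of_nonneg_right
              (hm1 α k (Ne.symm (Finset.ne_of_mem_erase hk))) (by linarith [hmin k])
        rw [← Finset.mul_sum] at hle
        rw [hE2] at hle
        have hupRα : -(u p) * Rα ≤ -(u p) * T α α :=
          mul_le_mul_of_nonneg_left (hdom α) (by linarith)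
        have hρu : ρ * T α α = -(u p) * T α α := by rw [hρdef]
        linarith only [hle, hupRα, hρu, hw0 α]
      -- combine over the n-2 other indices
      set s2 : Finset (Fin n) := (Finset.univ.erase p).erase α with hs2
      have hαmem : α ∈ Finset.univ.erase p :=
        Finset.mem_erase.2 ⟨Ne.symm hpα, Finset.mem_univ α⟩
      have hs2card : ((s2.card : ℝ)) = (n:ℝ) - 2 := by
        rw [hs2, Finset.card_erase_of_mem hαmem, Finset.card_erase_of_mem (Finset.mem_univ p),
          Finset.card_univ, Fintype.card_fin, Nat.cast_sub (by omega), Nat.cast_sub (by omega)]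
        ring
      have hHs : ∑ k ∈ s2, (u α - u k) ≤ ∑ k ∈ Finset.univ.erase p, (u α - u k) := by
        apply Finset.sum_le_sum_of_subset_of_nonneg (Finset.erase_subset _ _)
        intro k _ _
        linarith [hmax k]
      have hLs : ∑ k ∈ s2, (u k - u p) ≤ ∑ k ∈ Finset.univ.erase α, (u k - u p) := by
        apply Finset.sum_le_sum_of_subset_of_nonneg
        · intro k hk
          rw [hs2] at hk
          exact Finset.mem_erase.2 ⟨(Finset.mem_erase.1 hk).1, Finset.mem_univ k⟩
        · intro k _ _
          linarith [hmin k]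
      have hsum2 : ((n:ℝ) - 2) * (u α - u p)
          ≤ (∑ k ∈ Finset.univ.erase p, (u α - u k))
            + ∑ k ∈ Finset.univ.erase α, (u k - u p) := by
        have h1 : ∑ k ∈ s2, ((u α - u k) + (u k - u p)) = ((n:ℝ) - 2) * (u α - u p) := by
          have : ∀ k ∈ s2, (u α - u k) + (u k - u p) = u α - u p := fun k _ => by ring
          rw [Finset.sum_congr rfl this, Finset.sum_const, nsmul_eq_mul, hs2card]
        rw [Finset.sum_add_distrib] at h1
        linarith [hHs, hLs]
      -- KEY inequality
      have hKEY : 2 * m * ((n:ℝ) - 2) * ρ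
          ≤ w p + (T α α + m * ((n:ℝ) - 2) - T p p) * (ρ - u α) := by
        have hmul : m * (((n:ℝ) - 2) * (u α - u p))
            ≤ m * ((∑ k ∈ Finset.univ.erase p, (u α - u k))
              + ∑ k ∈ Finset.univ.erase α, (u k - u p)) :=
          mul_le_mul_of_nonneg_left hsum2 (le_of_lt hm0)
        rw [show u α - u p = u α + ρ from by rw [hρdef]; ring] at hmul
        linarith only [hH1, hL1, hmul]
      -- eliminate e
      have hT1 : 2 * m * ((n:ℝ) - 2) * ρ * (T p p * T j j)
          ≤ M * ((n:ℝ) * M + ((n:ℝ) - 2) * m) := by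
        have he0 : 0 ≤ ρ - u α := by linarith
        have hwpM : w p * T j j ≤ M := hwM p
        have hTαα : T α α ≤ (n:ℝ) * M := hdiag_ub α
        have hTpp : ((n:ℝ) - 1) * m ≤ T p p := hdiag_lb p
        have hTpp0 : 0 < T p p := hdiag_pos p
        have hκpos : 0 < T α α + m * ((n:ℝ) - 2) := by
          have := mul_pos hm0 hn2
          linarith only [hdiag_pos α, this]
        have hnm2 : 0 < ((n:ℝ) - 2) * m := mul_pos hn2 hm0
        have hTppub : T p p ≤ (n:ℝ) * M := hdiag_ub p
        rcases le_or_gt (T α α + m * ((n:ℝ) - 2) - T p p) 0 with hκ | hκ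
        · have hprod : 0 ≤ -(T α α + m * ((n:ℝ) - 2) - T p p) * (ρ - u α) :=
            mul_nonneg (by linarith only [hκ]) he0
          have h0 : 2 * m * ((n:ℝ) - 2) * ρ ≤ w p := by
            linarith only [hKEY, hprod]
          have h0' := mul_le_mul_of_nonneg_right h0
            (le_of_lt (mul_pos hTpp0 hτ0))
          have hA : w p * (T p p * T j j) = (w p * T j j) * T p p := by ring
          have hB2 : (w p * T j j) * T p p ≤ M * T p p :=
            mul_le_mul_of_nonneg_right hwpM (le_of_lt hTpp0)
          have hC2 : M * T p p ≤ M * ((n:ℝ) * M + ((n:ℝ) - 2) * m) :=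
            mul_le_mul_of_nonneg_left (by linarith only [hTppub, hnm2]) (le_of_lt hM0)
          linarith only [h0', hA, hB2, hC2]
        · have ha := mul_le_mul_of_nonneg_right hKEY (le_of_lt hTpp0)
          have hb := mul_le_mul_of_nonneg_left hi1 (le_of_lt hκ)
          have h1 : 2 * m * ((n:ℝ) - 2) * ρ * T p p
              ≤ w p * (T α α + m * ((n:ℝ) - 2)) := by
            linarith only [ha, hb]
          have h2 := mul_le_mul_of_nonneg_right h1 (le_of_lt hτ0)
          have h3 : w p * (T α α + m * ((n:ℝ) - 2)) * T j j
              = (w p * T j j) * (T α α + m * ((n:ℝ) - 2)) := by ring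
          have h4 : (w p * T j j) * (T α α + m * ((n:ℝ) - 2))
              ≤ M * (T α α + m * ((n:ℝ) - 2)) :=
            mul_le_mul_of_nonneg_right hwpM (le_of_lt hκpos)
          have h5 : M * (T α α + m * ((n:ℝ) - 2)) ≤ M * ((n:ℝ) * M + ((n:ℝ) - 2) * m) :=
            mul_le_mul_of_nonneg_left (by linarith) (le_of_lt hM0)
          linarith only [h2, h3, h4, h5]
      -- clear τ and T p p using lower bounds
      have hfinal : 2 * ((n:ℝ) - 2) * m ^ 3 * ((n:ℝ) - 1) ^ 2 * ρ
          ≤ M * ((n:ℝ) * M + ((n:ℝ) - 2) * m) := by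
        have hTpp : ((n:ℝ) - 1) * m ≤ T p p := hdiag_lb p
        have hτ : ((n:ℝ) - 1) * m ≤ T j j := hdiag_lb j
        have h0 : (0:ℝ) < ((n:ℝ) - 1) * m := mul_pos hn1 hm0
        have hx : (((n:ℝ) - 1) * m) * (((n:ℝ) - 1) * m) ≤ T p p * T j j :=
          mul_le_mul hTpp hτ (le_of_lt h0) (le_of_lt (lt_of_lt_of_le h0 hTpp))
        have hcoef : 0 < 2 * m * ((n:ℝ) - 2) * ρ := by
          have h1 := mul_pos (mul_pos hm0 hn2) hρ
          linarith only [h1]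
        calc 2 * ((n:ℝ) - 2) * m ^ 3 * ((n:ℝ) - 1) ^ 2 * ρ
            = 2 * m * ((n:ℝ) - 2) * ρ * ((((n:ℝ) - 1) * m) * (((n:ℝ) - 1) * m)) := by ring
          _ ≤ 2 * m * ((n:ℝ) - 2) * ρ * (T p p * T j j) :=
              mul_le_mul_of_nonneg_left hx (le_of_lt hcoef)
          _ ≤ M * ((n:ℝ) * M + ((n:ℝ) - 2) * m) := hT1
      -- compare Capprox with its first term
      have hden : (0:ℝ) < (n:ℝ) * M + ((n:ℝ) - 2) * m := by
        have h1 : (0:ℝ) < (n:ℝ) * M := mul_pos (by linarith) hM0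
        have h2 := mul_pos hn2 hm0
        linarith only [h1, h2]
      have hB : 0 ≤ ((n:ℝ) - 2) * M * m
          / ((((n:ℝ) - 2) * m + M) * (((n:ℝ) - 2) * m + 2 * M)) := by
        have e1 : (0:ℝ) ≤ ((n:ℝ) - 2) * m := (mul_pos hn2 hm0).le
        apply div_nonneg
        · exact mul_nonneg (mul_nonneg hn2.le hM0.le) hm0.le
        · exact mul_nonneg (by linarith) (by linarith)
      have hD3 : 0 ≤ M / (m * ((n:ℝ) - 1)) := by
        exact div_nonneg (le_of_lt hM0) (mul_pos hm0 hn1).le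
      have hCA : Capprox n m M ≤ 2 * ((n:ℝ) - 2) * m / ((n:ℝ) * M + ((n:ℝ) - 2) * m) := by
        unfold Capprox
        linarith
      rw [le_div_iff₀ hCpos_den]
      have hstep1 : ρ * (m ^ 2 * ((n:ℝ) - 1) ^ 2 * Capprox n m M)
          ≤ ρ * (m ^ 2 * ((n:ℝ) - 1) ^ 2
            * (2 * ((n:ℝ) - 2) * m / ((n:ℝ) * M + ((n:ℝ) - 2) * m))) := by
        apply mul_le_mul_of_nonneg_left _ (le_of_lt hρ)
        apply mul_le_mul_of_nonneg_left hCA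
        positivity
      have hstep2 : ρ * (m ^ 2 * ((n:ℝ) - 1) ^ 2
            * (2 * ((n:ℝ) - 2) * m / ((n:ℝ) * M + ((n:ℝ) - 2) * m))) ≤ M := by
        rw [show ρ * (m ^ 2 * ((n:ℝ) - 1) ^ 2
            * (2 * ((n:ℝ) - 2) * m / ((n:ℝ) * M + ((n:ℝ) - 2) * m)))
          = (2 * ((n:ℝ) - 2) * m ^ 3 * ((n:ℝ) - 1) ^ 2 * ρ)
            / ((n:ℝ) * M + ((n:ℝ) - 2) * m) from by ring]
        rw [div_le_iff₀ hden]
        linarith only [hfinal]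
      linarith
  -- conclude
  have hentry : (T⁻¹ - Matrix.diagonal fun k => (T k k)⁻¹) i j = u i := by
    by_cases hij : i = j
    · subst hij
      simp [Matrix.sub_apply, Matrix.diagonal_apply_eq, hu]
    · simp [Matrix.sub_apply, Matrix.diagonal_apply_ne _ hij, hu, hij]
  rw [hentry]
  exact le_trans huiρ hρG
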